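/- arXiv:2302.08439 — 3 statements merged into one kernel-verified Lean document; each statement's English description precedes it below -/
import Mathlib

section
/- Let ξ be a Student t random variable with 2 degrees of freedom. Then for any real numbers α and u, E|α + uξ| = √(α² + 2u²). -/
open MeasureTheory Real Filter Set Topology

-- convert rpow to sqrt
lemma rpow_neg_half_eq (a : ℝ) (ha : 0 ≤ a) : a ^ (-(1:ℝ)/2) = 1 / Real.sqrt a := by
  rw [neg_div, Real.rpow_neg ha, Real.sqrt_eq_rpow, one_div]
  norm_num

-- antiderivative
lemma F_hasDeriv (α u x : ℝ) :
    HasDerivAt (fun x : ℝ => (α * x - 2 * u) / 2 * (2 + x ^ 2) ^ (-(1:ℝ)/2))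
      ((α + u * x) * (2 + x ^ 2) ^ (-(3:ℝ)/2)) x := by
  have h2 : (0:ℝ) < 2 + x ^ 2 := by positivity
  have h1 : HasDerivAt (fun x : ℝ => 2 + x ^ 2) (2 * x) x := by
    simpa using ((hasDerivAt_pow 2 x).const_add 2)
  have hr : HasDerivAt (fun x : ℝ => (2 + x ^ 2) ^ (-(1:ℝ)/2))
      ((2 * x) * ((-(1:ℝ)/2) * (2 + x ^ 2) ^ (-(1:ℝ)/2 - 1))) x := by
    have := h1.rpow_const (p := -(1:ℝ)/2) (Or.inl h2.ne')
    convert this using 1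
    ring
  have hlin : HasDerivAt (fun x : ℝ => (α * x - 2 * u) / 2) (α / 2) x := by
    simpa using (((hasDerivAt_id x).const_mul α).sub_const (2*u)).div_const 2
  have := hlin.mul hr
  refine this.congr_deriv ?_
  have e1 : (-(1:ℝ)/2 - 1) = -(3:ℝ)/2 := by norm_num
  have e2 : (2 + x ^ 2) ^ (-(1:ℝ)/2) = (2 + x ^ 2) * (2 + x ^ 2) ^ (-(3:ℝ)/2) := by
    rw [← Real.rpow_one_add' h2.le (by norm_num)]
    norm_num
  rw [e1, e2]
  ring

lemma tendsto_aux : Tendsto (fun x : ℝ => x * (2 + x ^ 2) ^ (-(1:ℝ)/2)) atTop (𝓝 1) := by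
  have h : Tendsto (fun x : ℝ => Real.sqrt (1 - 2 / (2 + x ^ 2))) atTop (𝓝 1) := by
    have h1 : Tendsto (fun x : ℝ => 2 + x ^ 2) atTop atTop :=
      tendsto_atTop_add_const_left _ 2 (tendsto_pow_atTop two_ne_zero)
    have h2 : Tendsto (fun x : ℝ => 2 / (2 + x ^ 2)) atTop (𝓝 0) :=
      Tendsto.div_atTop tendsto_const_nhds h1
    have h3 : Tendsto (fun x : ℝ => 1 - 2 / (2 + x ^ 2)) atTop (𝓝 1) := by
      simpa using (tendsto_const_nhds (x := (1:ℝ))).sub h2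
    have := (Real.continuous_sqrt.tendsto 1).comp h3
    simpa [Function.comp_def] using this
  refine h.congr' ?_
  filter_upwards [eventually_gt_atTop (0:ℝ)] with x hx
  have h2 : (0:ℝ) < 2 + x ^ 2 := by positivity
  rw [rpow_neg_half_eq _ h2.le]
  rw [show (1 : ℝ) - 2 / (2 + x ^ 2) = x ^ 2 / (2 + x ^ 2) by field_simp; ring]
  rw [Real.sqrt_div' (x ^ 2) (by positivity), Real.sqrt_sq hx.le]
  ring

lemma tendsto_zero_aux : Tendsto (fun x : ℝ => (2 + x ^ 2) ^ (-(1:ℝ)/2)) atTop (𝓝 0) := by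
  have h1 : Tendsto (fun x : ℝ => 2 + x ^ 2) atTop atTop :=
    tendsto_atTop_add_const_left _ 2 (tendsto_pow_atTop two_ne_zero)
  have := (tendsto_rpow_neg_atTop (y := 1/2) (by norm_num)).comp h1
  refine this.congr fun x => by rw [Function.comp]; norm_num

lemma F_tendsto (α u : ℝ) :
    Tendsto (fun x : ℝ => (α * x - 2 * u) / 2 * (2 + x ^ 2) ^ (-(1:ℝ)/2)) atTop (𝓝 (α / 2)) := by
  have h := ((tendsto_aux.const_mul (α/2)).sub (tendsto_zero_aux.const_mul u))
  have : α / 2 * 1 - u * 0 = α / 2 := by ring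
  rw [this] at h
  refine h.congr fun x => by ring

lemma Fc_eq (α u : ℝ) (hu : 0 < u) :
    (α * (-(α/u)) - 2 * u) / 2 * (2 + (-(α/u)) ^ 2) ^ (-(1:ℝ)/2) =
      -(Real.sqrt (α ^ 2 + 2 * u ^ 2)) / 2 := by
  have hu' := hu.ne'
  have h2 : (0:ℝ) < 2 + (-(α/u)) ^ 2 := by positivity
  rw [rpow_neg_half_eq _ h2.le]
  have hs : Real.sqrt (2 + (-(α/u)) ^ 2) * u = Real.sqrt (α ^ 2 + 2 * u ^ 2) := by
    calc Real.sqrt (2 + (-(α/u)) ^ 2) * u = Real.sqrt ((2 + (-(α/u)) ^ 2) * u ^ 2) := by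
          rw [Real.sqrt_mul h2.le, Real.sqrt_sq hu.le]
      _ = Real.sqrt (α ^ 2 + 2 * u ^ 2) := by congr 1; field_simp; ring
  have hpos : 0 < Real.sqrt (2 + (-(α/u)) ^ 2) := Real.sqrt_pos.mpr h2
  have htt : Real.sqrt (2 + (-(α/u)) ^ 2) * Real.sqrt (2 + (-(α/u)) ^ 2)
      = 2 + (-(α/u)) ^ 2 := Real.mul_self_sqrt h2.le
  have hnum : α * (-(α/u)) - 2 * u = -(α ^ 2 + 2 * u ^ 2) / u := by
    field_simp; ring
  have hq : (2 + (-(α/u)) ^ 2) * u ^ 2 = α ^ 2 + 2 * u ^ 2 := by field_simp; ring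
  have hss : Real.sqrt (α ^ 2 + 2 * u ^ 2) * Real.sqrt (α ^ 2 + 2 * u ^ 2)
      = α ^ 2 + 2 * u ^ 2 := Real.mul_self_sqrt (by positivity)
  rw [hnum]
  calc -(α ^ 2 + 2 * u ^ 2) / u / 2 * (1 / Real.sqrt (2 + (-(α/u)) ^ 2))
      = -(Real.sqrt (α ^ 2 + 2 * u ^ 2) * Real.sqrt (α ^ 2 + 2 * u ^ 2)) /
          (u * Real.sqrt (2 + (-(α/u)) ^ 2)) / 2 := by rw [hss]; ring
    _ = -(Real.sqrt (α ^ 2 + 2 * u ^ 2) * (Real.sqrt (2 + (-(α/u)) ^ 2) * u)) /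
          (u * Real.sqrt (2 + (-(α/u)) ^ 2)) / 2 := by rw [hs]
    _ = -(Real.sqrt (α ^ 2 + 2 * u ^ 2)) / 2 := by
          field_simp

lemma key (α u : ℝ) (hu : 0 < u) :
    (∫ x in Ioi (-(α/u)), |α + u * x| * (2 + x ^ 2) ^ (-(3:ℝ)/2)) =
      α / 2 + Real.sqrt (α ^ 2 + 2 * u ^ 2) / 2 ∧
    IntegrableOn (fun x => |α + u * x| * (2 + x ^ 2) ^ (-(3:ℝ)/2)) (Ioi (-(α/u))) := by
  set c := -(α/u) with hc
  have huc : u * c = -α := by rw [hc]; field_simp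
  have habs : ∀ x ∈ Ioi c, |α + u * x| * (2 + x ^ 2) ^ (-(3:ℝ)/2)
      = (α + u * x) * (2 + x ^ 2) ^ (-(3:ℝ)/2) := by
    intro x hx
    have : 0 ≤ α + u * x := by
      nlinarith [mul_lt_mul_of_pos_left (show c < x from hx) hu]
    rw [abs_of_nonneg this]
  have hcont : ContinuousWithinAt
      (fun x : ℝ => (α * x - 2 * u) / 2 * (2 + x ^ 2) ^ (-(1:ℝ)/2)) (Ici c) c :=
    (F_hasDeriv α u c).continuousAt.continuousWithinAt
  have hderiv : ∀ x ∈ Ioi c, HasDerivAt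
      (fun x : ℝ => (α * x - 2 * u) / 2 * (2 + x ^ 2) ^ (-(1:ℝ)/2))
      ((α + u * x) * (2 + x ^ 2) ^ (-(3:ℝ)/2)) x := fun x _ => F_hasDeriv α u x
  have hnn : ∀ x ∈ Ioi c, 0 ≤ (α + u * x) * (2 + x ^ 2) ^ (-(3:ℝ)/2) := by
    intro x hx
    have h1 : 0 ≤ α + u * x := by
      nlinarith [mul_lt_mul_of_pos_left (show c < x from hx) hu]
    positivity
  have hint := integrableOn_Ioi_deriv_of_nonneg hcont hderiv hnn (F_tendsto α u)
  constructor
  · rw [setIntegral_congr_fun measurableSet_Ioi habs,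
      integral_Ioi_of_hasDerivAt_of_nonneg hcont hderiv hnn (F_tendsto α u), Fc_eq α u hu]
    ring
  · exact hint.congr_fun (fun x hx => (habs x hx).symm) measurableSet_Ioi

lemma main' (α u : ℝ) (hu : 0 < u) :
    (∫ x : ℝ, |α + u * x| * (2 + x ^ 2) ^ (-(3:ℝ)/2)) =
      Real.sqrt (α ^ 2 + 2 * u ^ 2) := by
  set c := -(α/u) with hc
  set f : ℝ → ℝ := fun x => |α + u * x| * (2 + x ^ 2) ^ (-(3:ℝ)/2) with hf
  set g : ℝ → ℝ := fun x => |(-α) + u * x| * (2 + x ^ 2) ^ (-(3:ℝ)/2) with hg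
  have hfg : ∀ x : ℝ, g (-x) = f x := by
    intro x
    simp only [hf, hg, neg_sq]
    congr 1
    rw [show (-α) + u * (-x) = -(α + u * x) by ring, abs_neg]
  -- Iic integral equals Ioi integral of g
  have hIic : (∫ x in Iic c, f x) = ∫ x in Ioi (-c), g x := by
    rw [← integral_comp_neg_Iic c g]
    exact setIntegral_congr_fun measurableSet_Iic fun x _ => (hfg x).symm
  have hcg : -c = -((-α)/u) := by rw [hc]; ring
  have keyf := key α u hu
  have keyg := key (-α) u hu
  rw [← hc] at keyf
  rw [← hcg] at keyg
  -- integrability on Iic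
  have A : MeasurableEmbedding (fun x : ℝ => -x) :=
    (Homeomorph.neg ℝ).isClosedEmbedding.measurableEmbedding
  have hintIic : IntegrableOn f (Iic c) := by
    have h1 : IntegrableOn g (Ici (-c)) := by
      rw [integrableOn_Ici_iff_integrableOn_Ioi]
      exact keyg.2
    have h2 : IntegrableOn (g ∘ fun x : ℝ => -x) ((fun x : ℝ => -x) ⁻¹' (Ici (-c))) := by
      rw [← A.integrableOn_map_iff, Measure.map_neg_eq_self]
      exact h1
    have h3 : ((fun x : ℝ => -x) ⁻¹' (Ici (-c))) = Iic c := by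
      ext x; simp
    rw [h3] at h2
    exact h2.congr_fun (fun x _ => hfg x) measurableSet_Iic
  rw [← intervalIntegral.integral_Iic_add_Ioi (b := c) hintIic keyf.2, hIic, keyg.1, keyf.1]
  rw [show (-α) ^ 2 = α ^ 2 by ring]
  ring

lemma dens_eq (x : ℝ) :
    1 / (2 * Real.sqrt 2) * (1 + x ^ 2 / 2) ^ (-(3:ℝ) / 2) = (2 + x ^ 2) ^ (-(3:ℝ)/2) := by
  have h1 : (1 + x ^ 2 / 2 : ℝ) = (2 + x ^ 2) / 2 := by ring
  have h2 : ((2:ℝ)) ^ (-(3:ℝ)/2) = 1 / (2 * Real.sqrt 2) := by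
    rw [neg_div, Real.rpow_neg (by norm_num : (0:ℝ) ≤ 2),
      show (3:ℝ)/2 = 1 + 1/2 by norm_num, Real.rpow_add (by norm_num), Real.rpow_one,
      ← Real.sqrt_eq_rpow, one_div]
  rw [h1, Real.div_rpow (by positivity) (by norm_num : (0:ℝ) ≤ 2), h2]
  have h3 : Real.sqrt 2 ≠ 0 := by positivity
  field_simp

lemma total : (∫ x : ℝ, ((2:ℝ) + x ^ 2) ^ (-(3:ℝ)/2)) = 1 := by
  set f : ℝ → ℝ := fun x => (1 + 0 * x) * (2 + x ^ 2) ^ (-(3:ℝ)/2) with hf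
  have hfe : ∀ x : ℝ, f x = (2 + x ^ 2) ^ (-(3:ℝ)/2) := fun x => by simp [hf]
  have hcont : ContinuousWithinAt
      (fun x : ℝ => (1 * x - 2 * 0) / 2 * (2 + x ^ 2) ^ (-(1:ℝ)/2)) (Ici 0) 0 :=
    (F_hasDeriv 1 0 0).continuousAt.continuousWithinAt
  have hderiv : ∀ x ∈ Ioi (0:ℝ), HasDerivAt
      (fun x : ℝ => (1 * x - 2 * 0) / 2 * (2 + x ^ 2) ^ (-(1:ℝ)/2)) (f x) x :=
    fun x _ => F_hasDeriv 1 0 x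
  have hnn : ∀ x ∈ Ioi (0:ℝ), 0 ≤ f x := by
    intro x _
    rw [hfe x]; positivity
  have hIoi : (∫ x in Ioi (0:ℝ), f x) = 1 / 2 := by
    rw [integral_Ioi_of_hasDerivAt_of_nonneg hcont hderiv hnn (F_tendsto 1 0)]
    norm_num
  have hintIoi : IntegrableOn f (Ioi (0:ℝ)) :=
    integrableOn_Ioi_deriv_of_nonneg hcont hderiv hnn (F_tendsto 1 0)
  have hsymm : ∀ x : ℝ, f (-x) = f x := by intro x; simp [hf]
  have hIic : (∫ x in Iic (0:ℝ), f x) = 1 / 2 := by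
    have := integral_comp_neg_Iic (0:ℝ) f
    rw [neg_zero] at this
    rw [← hIoi, ← this]
    exact setIntegral_congr_fun measurableSet_Iic fun x _ => (hsymm x).symm
  have hintIic : IntegrableOn f (Iic (0:ℝ)) := by
    have A : MeasurableEmbedding (fun x : ℝ => -x) :=
      (Homeomorph.neg ℝ).isClosedEmbedding.measurableEmbedding
    have h1 : IntegrableOn f (Ici (0:ℝ)) := by
      rw [integrableOn_Ici_iff_integrableOn_Ioi]; exact hintIoi
    have h2 : IntegrableOn (f ∘ fun x : ℝ => -x) ((fun x : ℝ => -x) ⁻¹' (Ici 0)) := by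
      rw [← A.integrableOn_map_iff, Measure.map_neg_eq_self]
      exact h1
    have h3 : ((fun x : ℝ => -x) ⁻¹' (Ici (0:ℝ))) = Iic 0 := by ext x; simp
    rw [h3] at h2
    exact h2.congr_fun (fun x _ => hsymm x) measurableSet_Iic
  have := intervalIntegral.integral_Iic_add_Ioi (b := (0:ℝ)) hintIic hintIoi
  rw [hIic, hIoi] at this
  have heq : (∫ x : ℝ, ((2:ℝ) + x ^ 2) ^ (-(3:ℝ)/2)) = ∫ x : ℝ, f x :=
    integral_congr_ae (Filter.Eventually.of_forall fun x => (hfe x).symm)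
  rw [heq, ← this]
  norm_num

/-- For ξ a Student t random variable with 2 degrees of freedom (density
1/(2√2)·(1 + x²/2)^{−3/2}), for any reals α, u: E|α + uξ| = √(α² + 2u²). -/
theorem stmt_1 (α u : ℝ) :
    ∫ x : ℝ, |α + u * x| * (1 / (2 * Real.sqrt 2) * (1 + x ^ 2 / 2) ^ (-(3:ℝ) / 2)) =
    Real.sqrt (α ^ 2 + 2 * u ^ 2) := by
  have hdens : (∫ x : ℝ, |α + u * x| * (1 / (2 * Real.sqrt 2) * (1 + x ^ 2 / 2) ^ (-(3:ℝ) / 2)))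
      = ∫ x : ℝ, |α + u * x| * (2 + x ^ 2) ^ (-(3:ℝ)/2) :=
    integral_congr_ae (Filter.Eventually.of_forall fun x => by simp only [dens_eq x])
  rw [hdens]
  rcases lt_trichotomy u 0 with hu | hu | hu
  · have h := main' (-α) (-u) (by linarith)
    have he : (∫ x : ℝ, |α + u * x| * (2 + x ^ 2) ^ (-(3:ℝ)/2))
        = ∫ x : ℝ, |(-α) + (-u) * x| * (2 + x ^ 2) ^ (-(3:ℝ)/2) :=
      integral_congr_ae (Filter.Eventually.of_forall fun x => by
        simp only
        rw [show (-α) + (-u) * x = -(α + u * x) by ring, abs_neg])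
    rw [he, h]
    congr 1
    ring
  · subst hu
    have he : (∫ x : ℝ, |α + 0 * x| * (2 + x ^ 2) ^ (-(3:ℝ)/2))
        = ∫ x : ℝ, |α| * (2 + x ^ 2) ^ (-(3:ℝ)/2) :=
      integral_congr_ae (Filter.Eventually.of_forall fun x => by simp only; norm_num)
    rw [he, integral_const_mul, total]
    rw [show α ^ 2 + 2 * 0 ^ 2 = α ^ 2 by ring, Real.sqrt_sq_eq_abs]
    ring
  · exact main' α u hu
end

section
/- For every real x and b > 0, exp(−b|x|) = ∫₀^∞ (1/√(πω)) · exp(b²x²/(−4ω)) · e^{−ω} dω, i.e., the Laplace kernel is a scale mixture of Gaussians with standard exponential mixing distribution. -/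
open MeasureTheory Real
open Set

lemma aux_integrable (c : ℝ) (_hc : 0 < c) :
    IntegrableOn (fun t : ℝ => Real.exp (-(t - c/t)^2)) (Ioi 0) := by
  have hmeas : AEStronglyMeasurable (fun t : ℝ => Real.exp (-(t - c/t)^2))
      (volume.restrict (Ioi (0:ℝ))) := by
    apply ContinuousOn.aestronglyMeasurable _ measurableSet_Ioi
    fun_prop (disch := intro t ht; exact ne_of_gt ht)
  have hint : IntegrableOn (fun t : ℝ => Real.exp (2*c) * Real.exp (-t^2)) (Ioi 0) := by
    have := ((integrable_exp_neg_mul_sq (one_pos)).const_mul (Real.exp (2*c))).integrableOn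
      (s := Ioi 0)
    simpa using this
  refine hint.mono' hmeas ?_
  filter_upwards [ae_restrict_mem measurableSet_Ioi] with t ht
  rw [norm_of_nonneg (Real.exp_pos _).le, ← Real.exp_add]
  apply Real.exp_le_exp.2
  have ht0 : (0:ℝ) < t := ht
  have : (t - c/t)^2 = t^2 - 2*c + (c/t)^2 := by
    field_simp; ring
  rw [this]; nlinarith [sq_nonneg (c/t)]

lemma aux_image (c : ℝ) (hc : 0 < c) :
    (fun t : ℝ => t - c/t) '' (Ioi 0) = univ := by
  apply eq_univ_of_forall
  intro u
  set s := Real.sqrt (u^2 + 4*c) with hs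
  have hs0 : |u| < s := by
    rw [hs, ← Real.sqrt_sq_eq_abs]
    exact Real.sqrt_lt_sqrt (sq_nonneg u) (by linarith)
  have ht0 : (0:ℝ) < (u + s)/2 := by
    have := neg_abs_le u; linarith
  refine ⟨(u + s)/2, ht0, ?_⟩
  have hsq : s^2 = u^2 + 4*c := Real.sq_sqrt (by nlinarith [abs_nonneg u, neg_abs_le u])
  have hus : (0:ℝ) < u + s := by linarith
  show (u + s)/2 - c / ((u + s)/2) = u
  rw [div_sub_div _ _ (by norm_num : (2:ℝ) ≠ 0) (by positivity), div_eq_iff (by positivity)]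
  nlinarith [hsq]

lemma aux_glasser (c : ℝ) (hc : 0 < c) :
    ∫ t in Ioi (0:ℝ), Real.exp (-(t - c/t)^2) = Real.sqrt π / 2 := by
  set h : ℝ → ℝ := fun t => Real.exp (-(t - c/t)^2) with hh
  -- substitution t ↦ c/t : ∫ h = ∫ (c/t²) h
  have hd1 : ∀ t ∈ Ioi (0:ℝ), HasDerivWithinAt (fun t : ℝ => c/t) (-(c/t^2)) (Ioi 0) t := by
    intro t ht
    have : HasDerivAt (fun t : ℝ => c/t) (-(c/t^2)) t := by
      simpa [div_eq_mul_inv, sq] using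
        ((hasDerivAt_inv (ne_of_gt ht)).const_mul c)
    exact this.hasDerivWithinAt
  have hinj1 : InjOn (fun t : ℝ => c/t) (Ioi 0) := by
    intro a ha b hb hab
    rw [div_eq_div_iff (ne_of_gt ha) (ne_of_gt hb)] at hab
    exact (mul_left_cancel₀ (ne_of_gt hc) hab).symm
  have himg1 : (fun t : ℝ => c/t) '' (Ioi 0) = Ioi 0 := by
    ext u; constructor
    · rintro ⟨t, ht, rfl⟩; exact div_pos hc ht
    · intro hu; exact ⟨c/u, div_pos hc hu, by field_simp⟩
  have key1 : ∫ t in Ioi (0:ℝ), h t = ∫ t in Ioi (0:ℝ), (c/t^2) * h t := by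
    conv_lhs => rw [← himg1]
    rw [integral_image_eq_integral_abs_deriv_smul measurableSet_Ioi hd1 hinj1]
    refine setIntegral_congr_fun measurableSet_Ioi fun t ht => ?_
    have ht0 : (0:ℝ) < t := ht
    have hct : c / (c/t) = t := by field_simp
    have hhh : h (c/t) = h t := by
      simp only [hh]; rw [hct]; congr 1; ring
    rw [smul_eq_mul, abs_neg, abs_of_nonneg (by positivity), hhh]
  -- integrability of (c/t^2) * h t
  have hint : IntegrableOn h (Ioi 0) := aux_integrable c hc
  have hint2 : IntegrableOn (fun t : ℝ => (c/t^2) * h t) (Ioi 0) := by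
    have := (integrableOn_image_iff_integrableOn_abs_deriv_smul measurableSet_Ioi hd1 hinj1
      h).1 (by rw [himg1]; exact hint)
    refine this.congr_fun (fun t ht => ?_) measurableSet_Ioi
    have ht0 : (0:ℝ) < t := ht
    have hct : c / (c/t) = t := by field_simp
    have hhh : h (c/t) = h t := by
      simp only [hh]; rw [hct]; congr 1; ring
    dsimp only; rw [smul_eq_mul, abs_neg, abs_of_nonneg (by positivity), hhh]
  -- substitution u = t - c/t
  have hd2 : ∀ t ∈ Ioi (0:ℝ), HasDerivWithinAt (fun t : ℝ => t - c/t) (1 + c/t^2) (Ioi 0) t := by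
    intro t ht
    have h1 : HasDerivAt (fun t : ℝ => t - c/t) (1 - -(c/t^2)) t := by
      exact (hasDerivAt_id t).sub (by
        have h' : HasDerivAt (fun t : ℝ => c/t) (-(c/t^2)) t := by
          simpa [div_eq_mul_inv, sq] using ((hasDerivAt_inv (ne_of_gt ht)).const_mul c)
        exact h')
    simpa [sub_neg_eq_add] using h1.hasDerivWithinAt
  have hinj2 : InjOn (fun t : ℝ => t - c/t) (Ioi 0) := by
    apply StrictMonoOn.injOn
    intro a ha b hb hab
    have : c/b < c/a := div_lt_div_of_pos_left hc ha hab
    simp only; linarith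
  have key2 : Real.sqrt π = ∫ t in Ioi (0:ℝ), (1 + c/t^2) * h t := by
    have e1 : (∫ u : ℝ, Real.exp (-u^2)) = Real.sqrt π := by
      simpa using integral_gaussian 1
    rw [← e1]
    have e2 : (∫ u : ℝ, Real.exp (-u^2)) = ∫ u in (fun t : ℝ => t - c/t) '' (Ioi 0),
        Real.exp (-u^2) := by rw [aux_image c hc, Measure.restrict_univ]
    rw [e2, integral_image_eq_integral_abs_deriv_smul measurableSet_Ioi hd2 hinj2]
    refine setIntegral_congr_fun measurableSet_Ioi fun t ht => ?_
    have ht0 : (0:ℝ) < t := ht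
    rw [smul_eq_mul, abs_of_nonneg (by positivity)]
  have split : ∫ t in Ioi (0:ℝ), (1 + c/t^2) * h t
      = (∫ t in Ioi (0:ℝ), h t) + ∫ t in Ioi (0:ℝ), (c/t^2) * h t := by
    rw [← integral_add hint hint2]
    refine setIntegral_congr_fun measurableSet_Ioi fun t ht => ?_
    ring
  rw [split, ← key1] at key2
  linarith [key2]

lemma aux_C (c : ℝ) (hc : 0 < c) :
    ∫ t in Ioi (0:ℝ), Real.exp (-(t^2 + c^2/t^2))
      = Real.sqrt π / 2 * Real.exp (-(2*c)) := by
  have e : ∫ t in Ioi (0:ℝ), Real.exp (-(t^2 + c^2/t^2))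
      = ∫ t in Ioi (0:ℝ), Real.exp (-(2*c)) * Real.exp (-(t - c/t)^2) := by
    refine setIntegral_congr_fun measurableSet_Ioi fun t ht => ?_
    have ht0 : (0:ℝ) < t := ht
    rw [← Real.exp_add]
    congr 1
    have : (t - c/t)^2 = t^2 - 2*c + (c/t)^2 := by field_simp; ring
    rw [this]; field_simp; ring
  rw [e, integral_const_mul, aux_glasser c hc]; ring

/-- Laplace kernel as a scale mixture of Gaussians with standard exponential
mixing: exp(−b|x|) = ∫₀^∞ (1/√(πω)) · exp(−b²x²/(4ω)) · e^{−ω} dω. -/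
theorem stmt_2 (x b : ℝ) (hb : 0 < b) :
    Real.exp (-(b * |x|)) =
    ∫ ω in Set.Ioi (0:ℝ),
      (1 / Real.sqrt (π * ω)) * Real.exp (b ^ 2 * x ^ 2 / (-(4 * ω))) * Real.exp (-ω) := by
  rcases eq_or_ne x 0 with rfl | hx
  · simp only [abs_zero, mul_zero, Real.exp_zero, ne_eq, OfNat.ofNat_ne_zero,
      not_false_eq_true, zero_pow, zero_div, mul_one]
    have hΓ : Real.Gamma (1/2 : ℝ) = ∫ t in Ioi (0:ℝ), Real.exp (-t) * t ^ ((1:ℝ)/2 - 1) :=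
      Real.Gamma_eq_integral (by norm_num)
    have e : ∫ ω in Ioi (0:ℝ), (1 / Real.sqrt (π * ω)) * Real.exp (-ω)
        = ∫ ω in Ioi (0:ℝ), (Real.sqrt π)⁻¹ * (Real.exp (-ω) * ω ^ ((1:ℝ)/2 - 1)) := by
      refine setIntegral_congr_fun measurableSet_Ioi fun ω hω => ?_
      have hω0 : (0:ℝ) < ω := hω
      rw [Real.sqrt_mul pi_pos.le, show ((1:ℝ)/2 - 1) = -(1/2) by norm_num,
        Real.rpow_neg hω0.le, ← Real.sqrt_eq_rpow]
      field_simp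
    rw [neg_zero, Real.exp_zero, e, integral_const_mul, ← hΓ, Real.Gamma_one_half_eq,
      inv_mul_cancel₀ (ne_of_gt (Real.sqrt_pos.2 pi_pos))]
  · set c : ℝ := b * |x| / 2 with hcdef
    have hc : 0 < c := by
      have : 0 < |x| := abs_pos.2 hx
      positivity
    have hd : ∀ t ∈ Ioi (0:ℝ), HasDerivWithinAt (fun t : ℝ => t^2) (2*t) (Ioi 0) t := by
      intro t _
      simpa using (hasDerivAt_pow 2 t).hasDerivWithinAt
    have hinj : InjOn (fun t : ℝ => t^2) (Ioi 0) := by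
      apply StrictMonoOn.injOn
      intro a ha b' hb' hab
      simp only
      nlinarith [mem_Ioi.1 ha, mem_Ioi.1 hb']
    have himg : (fun t : ℝ => t^2) '' (Ioi 0) = Ioi 0 := by
      ext u; constructor
      · rintro ⟨t, ht, rfl⟩; exact pow_pos (mem_Ioi.1 ht) 2
      · intro hu
        exact ⟨Real.sqrt u, Real.sqrt_pos.2 hu, Real.sq_sqrt (le_of_lt hu)⟩
    have key : (∫ ω in Set.Ioi (0:ℝ),
        (1 / Real.sqrt (π * ω)) * Real.exp (b ^ 2 * x ^ 2 / (-(4 * ω))) * Real.exp (-ω))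
        = ∫ t in Ioi (0:ℝ), (√π)⁻¹ * 2 * Real.exp (-(t^2 + c^2/t^2)) := by
      conv_lhs => rw [← himg]
      rw [integral_image_eq_integral_abs_deriv_smul measurableSet_Ioi hd hinj]
      refine setIntegral_congr_fun measurableSet_Ioi fun t ht => ?_
      have ht0 : (0:ℝ) < t := ht
      have h1 : Real.sqrt (π * t^2) = Real.sqrt π * t := by
        rw [Real.sqrt_mul pi_pos.le, Real.sqrt_sq ht0.le]
      have h2 : b ^ 2 * x ^ 2 / (-(4 * t^2)) = -(c^2/t^2) := by
        rw [hcdef]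
        rw [div_pow, mul_pow, sq_abs]
        field_simp
        ring
      rw [smul_eq_mul, abs_of_nonneg (by positivity), h1, h2, neg_add, Real.exp_add]
      field_simp
    rw [key, integral_const_mul, aux_C c hc]
    rw [show (2:ℝ)*c = b * |x| from by rw [hcdef]; ring]
    rw [show ((√π)⁻¹ * 2) * (√π / 2 * Real.exp (-(b*|x|))) =
      ((√π)⁻¹ * √π) * Real.exp (-(b*|x|)) from by ring,
      inv_mul_cancel₀ (ne_of_gt (Real.sqrt_pos.2 pi_pos)), one_mul]
end

section
/- Let Λ(x) = A + xB where A is n×n symmetric positive definite and B is n×n symmetric positive semidefinite. Then the function x ↦ det(Λ(x)) is a polynomial in x of degree equal to rank(B), with all coefficients nonnegative and positive leading coefficient. -/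
open Matrix Polynomial

/-- Product of polynomials with nonnegative coefficients has nonnegative coefficients. -/
lemma aux_coeff_mul_nonneg {p q : Polynomial ℝ} (hp : ∀ k, 0 ≤ p.coeff k)
    (hq : ∀ k, 0 ≤ q.coeff k) : ∀ k, 0 ≤ (p * q).coeff k := by
  intro k
  rw [Polynomial.coeff_mul]
  exact Finset.sum_nonneg fun x _ => mul_nonneg (hp _) (hq _)

lemma aux_coeff_prod_nonneg {ι : Type*} (s : Finset ι) (f : ι → Polynomial ℝ)
    (h : ∀ i ∈ s, ∀ k, 0 ≤ (f i).coeff k) : ∀ k, 0 ≤ (∏ i ∈ s, f i).coeff k := by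
  classical
  induction s using Finset.induction_on with
  | empty => intro k; simp [Polynomial.coeff_one]; positivity
  | insert a s' hi ih =>
    rw [Finset.prod_insert hi]
    exact aux_coeff_mul_nonneg (h a (Finset.mem_insert_self a s'))
      (ih fun i his k => h i (Finset.mem_insert_of_mem his) k)

open scoped MatrixOrder

/-- For A symmetric positive definite and B symmetric positive semidefinite,
x ↦ det(A + xB) is a polynomial of degree rank(B) with nonnegative coefficients
and positive leading coefficient. -/
theorem stmt_15 {n : ℕ} (A B : Matrix (Fin n) (Fin n) ℝ)
    (hA : A.PosDef) (hB : B.PosSemidef) :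
    ∃ p : Polynomial ℝ,
      (∀ x : ℝ, (A + x • B).det = p.eval x) ∧
      p.natDegree = B.rank ∧
      (∀ k, 0 ≤ p.coeff k) ∧
      0 < p.leadingCoeff := by
  classical
  set S := CFC.sqrt A with hSdef
  have hS : S.PosSemidef := (CFC.sqrt_nonneg A).posSemidef
  have hSS : S * S = A := CFC.sqrt_mul_sqrt_self A hA.posSemidef.nonneg
  have hdetA : 0 < A.det := hA.det_pos
  have hdetS : S.det ≠ 0 := by
    intro h
    rw [← hSS, det_mul, h, mul_zero] at hdetA
    exact lt_irrefl 0 hdetA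
  have hSunit : IsUnit S.det := isUnit_iff_ne_zero.mpr hdetS
  set C : Matrix (Fin n) (Fin n) ℝ := S⁻¹ * B * S⁻¹ with hCdef
  have hSinvH : S⁻¹ᴴ = S⁻¹ := by
    rw [Matrix.conjTranspose_nonsing_inv, hS.1]
  have hC : C.PosSemidef := by
    have := hB.conjTranspose_mul_mul_same S⁻¹
    rwa [hSinvH] at this
  have hrankC : C.rank = B.rank := by
    rw [hCdef, Matrix.rank_mul_eq_left_of_isUnit_det _ _ (by simpa using hSunit.inv),
      Matrix.rank_mul_eq_right_of_isUnit_det _ _ (by simpa using hSunit.inv)]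
  have hSCS : S * C * S = B := by
    rw [hCdef]
    rw [show S * (S⁻¹ * B * S⁻¹) * S = (S * S⁻¹) * B * (S⁻¹ * S) by simp only [Matrix.mul_assoc]]
    rw [Matrix.mul_nonsing_inv _ hSunit, Matrix.nonsing_inv_mul _ hSunit, one_mul, mul_one]
  set μ := hC.1.eigenvalues with hμdef
  have hμnonneg : ∀ i, 0 ≤ μ i := fun i => hC.eigenvalues_nonneg i
  set U : Matrix (Fin n) (Fin n) ℝ := (hC.1.eigenvectorUnitary : Matrix (Fin n) (Fin n) ℝ) with hUdef
  have hspec : C = U * Matrix.diagonal (RCLike.ofReal ∘ μ) * star U := hC.1.spectral_theorem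
  have hUU : U * star U = 1 := Matrix.mem_unitaryGroup_iff.mp hC.1.eigenvectorUnitary.2
  -- key determinant identity
  have hdet : ∀ x : ℝ, (A + x • B).det = A.det * ∏ i, (μ i * x + 1) := by
    intro x
    have h1 : A + x • B = S * (1 + x • C) * S := by
      rw [← hSS]
      have : S * (1 + x • C) * S = S * S + x • (S * C * S) := by
        rw [Matrix.mul_add, Matrix.add_mul, Matrix.mul_one, Matrix.mul_smul,
          Matrix.smul_mul]
      rw [this, hSCS]
    have h2 : (1 : Matrix (Fin n) (Fin n) ℝ) + x • C
        = U * Matrix.diagonal (fun i => 1 + x * μ i) * star U := by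
      have hd : Matrix.diagonal (fun i => 1 + x * μ i)
          = 1 + x • Matrix.diagonal (RCLike.ofReal ∘ μ) := by
        rw [← Matrix.diagonal_one, ← Matrix.diagonal_smul, ← Matrix.diagonal_add]
        congr 1
      rw [hd, Matrix.mul_add, Matrix.add_mul, Matrix.mul_one, hUU,
        Matrix.mul_smul, Matrix.smul_mul, ← hspec]
    rw [h1, det_mul, det_mul, mul_comm _ S.det, ← mul_assoc, h2]
    rw [det_mul_right_comm U _ (star U), hUU, one_mul, det_diagonal]
    rw [← det_mul, hSS]
    congr 1
    exact Finset.prod_congr rfl fun i _ => by ring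
  -- the polynomial
  refine ⟨Polynomial.C A.det * ∏ i, (Polynomial.C (μ i) * Polynomial.X + Polynomial.C 1), ?_, ?_, ?_, ?_⟩
  · intro x
    rw [hdet x]
    simp [Polynomial.eval_prod]
  · rw [Polynomial.natDegree_C_mul (ne_of_gt hdetA)]
    rw [Polynomial.natDegree_prod _ _ (fun i _ => ?_)]
    · rw [← hrankC, hC.1.rank_eq_card_non_zero_eigs, Fintype.card_subtype, Finset.card_filter]
      refine Finset.sum_congr rfl fun i _ => ?_
      simp only [← hμdef]
      by_cases h : μ i = 0
      · simp [h, Polynomial.natDegree_one]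
      · rw [Polynomial.natDegree_linear h]
        simp [h]
    · intro h
      have := congrArg (Polynomial.coeff · 0) h
      simp at this
  · intro k
    apply aux_coeff_mul_nonneg
    · intro k
      simp only [Polynomial.coeff_C]
      split <;> [exact le_of_lt hdetA; exact le_refl 0]
    · apply aux_coeff_prod_nonneg
      intro i _ k
      rw [Polynomial.coeff_add, Polynomial.coeff_C_mul, Polynomial.coeff_X, Polynomial.coeff_C]
      split_ifs <;> simp <;> linarith [hμnonneg i]
  · rw [Polynomial.leadingCoeff_mul, Polynomial.leadingCoeff_C, Polynomial.leadingCoeff_prod]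
    apply mul_pos hdetA
    apply Finset.prod_pos
    intro i _
    by_cases h : μ i = 0
    · simp [h]
    · rw [Polynomial.leadingCoeff_linear h]
      exact lt_of_le_of_ne (hμnonneg i) (Ne.symm h)
end
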